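/- Let L₀(s₀) = c₀ + s₀m₀ and L₁(s₁) = c₁ + s₁m₁ with q = m₀ × m₁ ≠ 0, t = c₀ − c₁, and let r₀ = c₀ + (q · (m₁ × t)/‖q‖²) m₀ and r₁ = c₁ + (q · (m₀ × t)/‖q‖²) m₁. Then for all s₀, s₁ ∈ ℝ, ‖r₀ − r₁‖ ≤ ‖(c₀ + s₀m₀) − (c₁ + s₁m₁)‖; i.e., (r₀, r₁) is a closest pair of points between the two lines. -/

import Mathlib

open RealInnerProductSpace

/-- The cross product on `EuclideanSpace ℝ (Fin 3)`. -/
noncomputable def cross3 (a b : EuclideanSpace ℝ (Fin 3)) : EuclideanSpace ℝ (Fin 3) :=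
  (WithLp.equiv 2 (Fin 3 → ℝ)).symm
    (crossProduct (WithLp.equiv 2 (Fin 3 → ℝ) a) (WithLp.equiv 2 (Fin 3 → ℝ) b))

lemma cross3_apply (a b : EuclideanSpace ℝ (Fin 3)) (i : Fin 3) :
    cross3 a b i = ![a 1 * b 2 - a 2 * b 1, a 2 * b 0 - a 0 * b 2, a 0 * b 1 - a 1 * b 0] i := by
  simp only [cross3, cross_apply]; rfl

lemma inner3 (x y : EuclideanSpace ℝ (Fin 3)) : ⟪x, y⟫ = x 0 * y 0 + x 1 * y 1 + x 2 * y 2 := by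
  simp [PiLp.inner_apply, Fin.sum_univ_three, RCLike.inner_apply, mul_comm]

lemma normsq3 (x : EuclideanSpace ℝ (Fin 3)) : ‖x‖ ^ 2 = x 0 ^ 2 + x 1 ^ 2 + x 2 ^ 2 := by
  rw [← real_inner_self_eq_norm_sq, inner3]; ring

lemma key (m₀ m₁ t : EuclideanSpace ℝ (Fin 3)) (hq : cross3 m₀ m₁ ≠ 0)
    (u : EuclideanSpace ℝ (Fin 3)) (hu : u = m₀ ∨ u = m₁) :
    ⟪t + (⟪cross3 m₀ m₁, cross3 m₁ t⟫ / ‖cross3 m₀ m₁‖ ^ 2) • m₀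
      - (⟪cross3 m₀ m₁, cross3 m₀ t⟫ / ‖cross3 m₀ m₁‖ ^ 2) • m₁, u⟫ = 0 := by
  have hD : ‖cross3 m₀ m₁‖ ^ 2 ≠ 0 := pow_ne_zero 2 (norm_ne_zero_iff.mpr hq)
  rw [normsq3] at hD ⊢
  rw [inner_sub_left, inner_add_left, real_inner_smul_left, real_inner_smul_left,
    inner3 t u, inner3 m₀ u, inner3 m₁ u, inner3, inner3]
  simp only [cross3_apply, Matrix.cons_val_zero, Matrix.cons_val_one, Matrix.head_cons,
    Matrix.cons_val_two, Matrix.tail_cons] at hD ⊢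
  rcases hu with h | h <;> subst h
  · field_simp; ring
  · linear_combination (-(t 0 * u 0 + t 1 * u 1 + t 2 * u 2)) * mul_inv_cancel₀ hD

/-- (r₀, r₁) is a closest pair of points between the two lines. -/
theorem closest_points_minimize (c₀ c₁ m₀ m₁ : EuclideanSpace ℝ (Fin 3))
    (hq : cross3 m₀ m₁ ≠ 0) :
    let q := cross3 m₀ m₁
    let t := c₀ - c₁
    let r₀ := c₀ + (⟪q, cross3 m₁ t⟫ / ‖q‖ ^ 2) • m₀
    let r₁ := c₁ + (⟪q, cross3 m₀ t⟫ / ‖q‖ ^ 2) • m₁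
    ∀ s₀ s₁ : ℝ, ‖r₀ - r₁‖ ≤ ‖(c₀ + s₀ • m₀) - (c₁ + s₁ • m₁)‖ := by
  intro q t r₀ r₁ s₀ s₁
  set a : ℝ := ⟪q, cross3 m₁ t⟫ / ‖q‖ ^ 2 with ha
  set b : ℝ := ⟪q, cross3 m₀ t⟫ / ‖q‖ ^ 2 with hb
  have hw : r₀ - r₁ = t + a • m₀ - b • m₁ := by
    simp only [r₀, r₁, t]; module
  have hv : (c₀ + s₀ • m₀) - (c₁ + s₁ • m₁)
      = (r₀ - r₁) + ((s₀ - a) • m₀ - (s₁ - b) • m₁) := by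
    rw [hw]; simp only [t]; module
  have h₀ : ⟪r₀ - r₁, m₀⟫ = 0 := by
    rw [hw]; exact key m₀ m₁ t hq m₀ (Or.inl rfl)
  have h₁ : ⟪r₀ - r₁, m₁⟫ = 0 := by
    rw [hw]; exact key m₀ m₁ t hq m₁ (Or.inr rfl)
  have horth : ⟪r₀ - r₁, (s₀ - a) • m₀ - (s₁ - b) • m₁⟫ = 0 := by
    rw [inner_sub_right, real_inner_smul_right, real_inner_smul_right, h₀, h₁]
    ring
  have hsq : ‖(c₀ + s₀ • m₀) - (c₁ + s₁ • m₁)‖ ^ 2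
      = ‖r₀ - r₁‖ ^ 2 + ‖(s₀ - a) • m₀ - (s₁ - b) • m₁‖ ^ 2 := by
    rw [hv, norm_add_sq_real, horth]; ring
  nlinarith [norm_nonneg ((c₀ + s₀ • m₀) - (c₁ + s₁ • m₁)), norm_nonneg (r₀ - r₁),
    sq_nonneg ‖(s₀ - a) • m₀ - (s₁ - b) • m₁‖]
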